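/- On Schwartz functions on ℝⁿ with values in Λ*_ℂ(ℝⁿ), let D₁ := Σ_k γ̂_k ∂_k (with γ̂_k = ε_k − ε_k*) and let c₊(f) := Σ_k x_k γ̌_k (Clifford multiplication by the position vector, with γ̌_k = ε_k + ε_k*). Then the anticommutator D₁ c₊(f) + c₊(f) D₁ equals the operator acting as multiplication by (2p − n) on p-forms, i.e. Σ_p (2p − n) id on the degree-p component. -/

import Mathlib

open Finset

/-- Model of the complexified exterior algebra of an `n`-dimensional real inner
product space with a chosen orthonormal basis: the Hilbert space with orthonormal
basis indexed by subsets `S ⊆ {1,…,n}`, the basis vector for `S = {i₁<…<i_p}`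
corresponding to `e_{i₁} ∧ … ∧ e_{i_p}`. -/
abbrev ExtAlg (n : ℕ) := EuclideanSpace ℂ (Finset (Fin n))

/-- Exterior multiplication on the left by the `k`-th orthonormal basis vector. -/
noncomputable def eps (n : ℕ) (k : Fin n) : ExtAlg n →ₗ[ℂ] ExtAlg n where
  toFun f := WithLp.toLp 2 (fun T : Finset (Fin n) => if k ∈ T then
      (-1 : ℂ) ^ (((T.erase k).filter (· < k)).card) * f (T.erase k) else 0)
  map_add' f g := by
    ext T
    by_cases h : k ∈ T <;> simp [h, PiLp.add_apply, mul_add]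
  map_smul' c f := by
    ext T
    by_cases h : k ∈ T <;> simp [h, PiLp.smul_apply, smul_eq_mul] <;> ring

/-- The adjoint of `eps` with respect to the canonical Hermitian inner product. -/
noncomputable def epsStar (n : ℕ) (k : Fin n) : ExtAlg n →ₗ[ℂ] ExtAlg n :=
  LinearMap.adjoint (eps n k)

section Aux1
variable {n : ℕ}

lemma filter_lt_erase {n : ℕ} (k : Fin n) (T : Finset (Fin n)) :
    (T.erase k).filter (· < k) = T.filter (· < k) := by
  ext i
  simp only [Finset.mem_filter, Finset.mem_erase]
  constructor
  · rintro ⟨⟨_, h1⟩, h2⟩; exact ⟨h1, h2⟩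
  · rintro ⟨h1, h2⟩; exact ⟨⟨ne_of_lt h2, h1⟩, h2⟩

lemma filter_lt_insert {n : ℕ} (k : Fin n) (T : Finset (Fin n)) :
    (insert k T).filter (· < k) = T.filter (· < k) := by
  ext i
  simp only [Finset.mem_filter, Finset.mem_insert]
  constructor
  · rintro ⟨h1 | h1, h2⟩
    · exact absurd h2 (by simp [h1])
    · exact ⟨h1, h2⟩
  · rintro ⟨h1, h2⟩; exact ⟨Or.inr h1, h2⟩

lemma eps_apply {n : ℕ} (k : Fin n) (f : ExtAlg n) (T : Finset (Fin n)) :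
    eps n k f T = if k ∈ T then
      (-1 : ℂ) ^ ((T.filter (· < k)).card) * f (T.erase k) else 0 := by
  rw [show eps n k f T = (if k ∈ T then
      (-1 : ℂ) ^ (((T.erase k).filter (· < k)).card) * f (T.erase k) else 0) from rfl]
  rw [filter_lt_erase]

noncomputable def epsStarE (n : ℕ) (k : Fin n) : ExtAlg n →ₗ[ℂ] ExtAlg n where
  toFun f := WithLp.toLp 2 (fun T : Finset (Fin n) => if k ∈ T then 0 else
      (-1 : ℂ) ^ ((T.filter (· < k)).card) * f (insert k T))
  map_add' f g := by
    ext T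
    by_cases h : k ∈ T <;> simp [h, PiLp.add_apply, mul_add]
  map_smul' c f := by
    ext T
    by_cases h : k ∈ T <;> simp [h, PiLp.smul_apply, smul_eq_mul] <;> ring

def xorK {n : ℕ} (k : Fin n) : Equiv.Perm (Finset (Fin n)) := by
  refine Function.Involutive.toPerm
    (fun T => if k ∈ T then T.erase k else insert k T) ?_
  intro T
  by_cases h : k ∈ T
  · simp [h, Finset.notMem_erase, Finset.insert_erase h]
  · simp [h, Finset.erase_insert h]

lemma epsStarE_apply {n : ℕ} (k : Fin n) (f : ExtAlg n) (T : Finset (Fin n)) :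
    epsStarE n k f T = if k ∈ T then 0 else
      (-1 : ℂ) ^ ((T.filter (· < k)).card) * f (insert k T) := rfl

lemma epsStar_eq (n : ℕ) (k : Fin n) : epsStar n k = epsStarE n k := by
  unfold epsStar
  symm
  rw [LinearMap.eq_adjoint_iff]
  intro f g
  simp only [PiLp.inner_apply, RCLike.inner_apply]
  rw [← Equiv.sum_comp (xorK k)]
  apply Finset.sum_congr rfl
  intro T _
  rw [show (xorK k) T = if k ∈ T then T.erase k else insert k T from rfl]
  by_cases h : k ∈ T
  · rw [if_pos h, epsStarE_apply, eps_apply, if_pos h,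
      if_neg (Finset.notMem_erase k T), filter_lt_erase, Finset.insert_erase h,
      map_mul, map_pow, map_neg, map_one]
    ring
  · rw [if_neg h, epsStarE_apply, eps_apply, if_neg h,
      if_pos (Finset.mem_insert_self k T), map_zero, mul_zero, zero_mul]

lemma epsStar_apply {n : ℕ} (k : Fin n) (f : ExtAlg n) (T : Finset (Fin n)) :
    epsStar n k f T = if k ∈ T then 0 else
      (-1 : ℂ) ^ ((T.filter (· < k)).card) * f (insert k T) := by
  rw [epsStar_eq]; rfl

-- Part 2: Clifford relations
variable {n : ℕ}

lemma card_filter_erase_not_lt {j k : Fin n} (h : ¬ j < k) (T : Finset (Fin n)) :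
    ((T.erase j).filter (· < k)).card = (T.filter (· < k)).card := by
  rw [Finset.filter_erase, Finset.erase_eq_of_notMem (by simp [h])]

lemma card_filter_erase_lt {j k : Fin n} (h : j < k) {T : Finset (Fin n)} (hj : j ∈ T) :
    ((T.erase j).filter (· < k)).card + 1 = (T.filter (· < k)).card := by
  rw [Finset.filter_erase]
  exact Finset.card_erase_add_one (Finset.mem_filter.mpr ⟨hj, h⟩)

lemma card_filter_insert_not_lt {j k : Fin n} (h : ¬ j < k) (T : Finset (Fin n)) :
    ((insert j T).filter (· < k)).card = (T.filter (· < k)).card := by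
  rw [Finset.filter_insert, if_neg h]

lemma card_filter_insert_lt {j k : Fin n} (h : j < k) {T : Finset (Fin n)} (hj : j ∉ T) :
    ((insert j T).filter (· < k)).card = (T.filter (· < k)).card + 1 := by
  rw [Finset.filter_insert, if_pos h,
    Finset.card_insert_of_notMem (fun hm => hj (Finset.mem_of_mem_filter j hm))]

lemma sg_swap {j k : Fin n} (hjk : j ≠ k) {T : Finset (Fin n)} (hj : j ∈ T) (hk : k ∈ T) :
    (-1:ℂ) ^ ((T.filter (· < j)).card) * (-1:ℂ) ^ (((T.erase j).filter (· < k)).card)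
      = -((-1:ℂ) ^ ((T.filter (· < k)).card) * (-1:ℂ) ^ (((T.erase k).filter (· < j)).card)) := by
  rcases hjk.lt_or_gt with h | h
  · rw [card_filter_erase_not_lt (asymm h) T, ← card_filter_erase_lt h hj, pow_succ]
    ring
  · rw [card_filter_erase_not_lt (asymm h) T, ← card_filter_erase_lt h hk, pow_succ]
    ring

lemma sg_mixed {j k : Fin n} (hjk : j ≠ k) {T : Finset (Fin n)} (hj : j ∈ T) (hk : k ∉ T) :
    (-1:ℂ) ^ ((T.filter (· < j)).card) * (-1:ℂ) ^ (((T.erase j).filter (· < k)).card)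
      = -((-1:ℂ) ^ ((T.filter (· < k)).card) * (-1:ℂ) ^ (((insert k T).filter (· < j)).card)) := by
  rcases hjk.lt_or_gt with h | h
  · rw [card_filter_insert_not_lt (asymm h)  T, ← card_filter_erase_lt h hj, pow_succ]
    ring
  · rw [card_filter_erase_not_lt (asymm h) T, card_filter_insert_lt h hk, pow_succ]
    ring

lemma eps_eps (j k : Fin n) (f : ExtAlg n) (T : Finset (Fin n)) :
    eps n j (eps n k f) T + eps n k (eps n j f) T = 0 := by
  rcases eq_or_ne j k with rfl | hjk
  · by_cases h : j ∈ T <;>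
      simp [eps_apply, Finset.mem_erase, h]
  · by_cases hj : j ∈ T <;> by_cases hk : k ∈ T <;>
      simp [eps_apply, Finset.mem_erase, hj, hk, hjk, Ne.symm hjk]
    rw [Finset.erase_right_comm (a := j) (b := k)]
    have := sg_swap hjk hj hk
    linear_combination f ((T.erase k).erase j) * this

lemma eps_epsStar {j k : Fin n} (hjk : j ≠ k) (f : ExtAlg n) (T : Finset (Fin n)) :
    eps n j (epsStar n k f) T + epsStar n k (eps n j f) T = 0 := by
  by_cases hj : j ∈ T <;> by_cases hk : k ∈ T <;>
    simp [eps_apply, epsStar_apply, Finset.mem_erase, Finset.mem_insert, hj, hk, hjk,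
      Ne.symm hjk]
  rw [Finset.erase_insert_of_ne (Ne.symm hjk)]
  have := sg_mixed hjk hj hk
  set A := f (insert k (T.erase j))
  linear_combination A * this

lemma eps_eps_op (j k : Fin n) :
    eps n j ∘ₗ eps n k + eps n k ∘ₗ eps n j = (0 : ExtAlg n →ₗ[ℂ] ExtAlg n) := by
  apply LinearMap.ext; intro f; ext T
  simpa [LinearMap.add_apply, LinearMap.comp_apply, PiLp.add_apply] using eps_eps j k f T

lemma epsStar_epsStar (j k : Fin n) (f : ExtAlg n) (T : Finset (Fin n)) :
    epsStar n j (epsStar n k f) T + epsStar n k (epsStar n j f) T = 0 := by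
  have h := congrArg LinearMap.adjoint (eps_eps_op j k)
  simp only [map_add, LinearMap.adjoint_comp, map_zero] at h
  have h2 := congrArg (fun v : ExtAlg n => v T) (congrArg (fun (L : ExtAlg n →ₗ[ℂ] ExtAlg n) => L f) h)
  simpa [epsStar, LinearMap.add_apply, LinearMap.comp_apply, PiLp.add_apply,
    add_comm] using h2

lemma epsStar_eps {j k : Fin n} (hjk : j ≠ k) (f : ExtAlg n) (T : Finset (Fin n)) :
    epsStar n j (eps n k f) T + eps n k (epsStar n j f) T = 0 := by
  have hop : eps n k ∘ₗ epsStar n j + epsStar n j ∘ₗ eps n k = (0 : ExtAlg n →ₗ[ℂ] ExtAlg n) := by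
    apply LinearMap.ext; intro g; ext S
    simpa [LinearMap.add_apply, LinearMap.comp_apply, PiLp.add_apply] using
      eps_epsStar (Ne.symm hjk) g S
  have h2 := congrArg (fun v : ExtAlg n => v T) (congrArg (fun (L : ExtAlg n →ₗ[ℂ] ExtAlg n) => L f) hop)
  simpa [LinearMap.add_apply, LinearMap.comp_apply, PiLp.add_apply, add_comm] using h2

lemma eps_epsStar_self (k : Fin n) (f : ExtAlg n) (T : Finset (Fin n)) :
    eps n k (epsStar n k f) T = if k ∈ T then f T else 0 := by
  by_cases h : k ∈ T
  · rw [eps_apply, if_pos h, epsStar_apply, if_neg (Finset.notMem_erase k T),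
      filter_lt_erase, Finset.insert_erase h, ← mul_assoc, ← pow_add,
      Even.neg_one_pow ⟨_, rfl⟩, one_mul, if_pos h]
  · rw [eps_apply, if_neg h, if_neg h]

lemma epsStar_eps_self (k : Fin n) (f : ExtAlg n) (T : Finset (Fin n)) :
    epsStar n k (eps n k f) T = if k ∈ T then 0 else f T := by
  by_cases h : k ∈ T
  · rw [epsStar_apply, if_pos h, if_pos h]
  · rw [epsStar_apply, if_neg h, eps_apply, if_pos (Finset.mem_insert_self k T),
      filter_lt_insert, Finset.erase_insert h, ← mul_assoc, ← pow_add,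
      Even.neg_one_pow ⟨_, rfl⟩, one_mul, if_neg h]

end Aux1

/-- `γ̂_k = ε_k − ε_k*`. -/
noncomputable def gammaHat (n : ℕ) (k : Fin n) : ExtAlg n →ₗ[ℂ] ExtAlg n :=
  eps n k - epsStar n k

/-- `γ̌_k = ε_k + ε_k*`. -/
noncomputable def gammaCheck (n : ℕ) (k : Fin n) : ExtAlg n →ₗ[ℂ] ExtAlg n :=
  eps n k + epsStar n k

section Aux2
variable {n : ℕ}

lemma anticomm (j k : Fin n) (f : ExtAlg n) (T : Finset (Fin n)) :
    gammaHat n j (gammaCheck n k f) T + gammaCheck n k (gammaHat n j f) T = 0 := by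
  simp only [gammaHat, gammaCheck, LinearMap.sub_apply, LinearMap.add_apply,
    map_add, map_sub, PiLp.add_apply, PiLp.sub_apply]
  rcases eq_or_ne j k with rfl | hjk
  · linear_combination eps_eps j j f T - epsStar_epsStar j j f T
  · linear_combination eps_eps j k f T + eps_epsStar hjk f T - epsStar_eps hjk f T
      - epsStar_epsStar j k f T

lemma gammaHat_gammaCheck_self (k : Fin n) (f : ExtAlg n) (T : Finset (Fin n)) :
    gammaHat n k (gammaCheck n k f) T = if k ∈ T then f T else -f T := by
  simp only [gammaHat, gammaCheck, LinearMap.sub_apply, LinearMap.add_apply,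
    map_add, map_sub, PiLp.add_apply, PiLp.sub_apply]
  have h3 := eps_epsStar_self k f T
  have h4 := epsStar_eps_self k f T
  by_cases h : k ∈ T
  · rw [if_pos h] at h3 h4 ⊢
    linear_combination (eps_eps k k f T) / 2 + h3 - h4 - (epsStar_epsStar k k f T) / 2
  · rw [if_neg h] at h3 h4 ⊢
    linear_combination (eps_eps k k f T) / 2 + h3 - h4 - (epsStar_epsStar k k f T) / 2

lemma sum_gammaHat_gammaCheck (f : ExtAlg n) (T : Finset (Fin n)) :
    ∑ k : Fin n, gammaHat n k (gammaCheck n k f) T = ((2 * T.card : ℂ) - n) * f T := by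
  rw [Finset.sum_congr rfl (fun k _ => gammaHat_gammaCheck_self k f T)]
  have : ∀ k : Fin n, (if k ∈ T then f T else -f T)
      = (if k ∈ T then (2 : ℂ) * f T else 0) - f T := by
    intro k; by_cases h : k ∈ T <;> simp [h] <;> ring
  rw [Finset.sum_congr rfl (fun k _ => this k), Finset.sum_sub_distrib,
    ← Finset.sum_filter, Finset.filter_mem_eq_inter, Finset.univ_inter,
    Finset.sum_const, Finset.sum_const, Finset.card_univ, Fintype.card_fin,
    nsmul_eq_mul, nsmul_eq_mul]
  ring

lemma anticomm' (j k : Fin n) (f : ExtAlg n) :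
    gammaHat n j (gammaCheck n k f) + gammaCheck n k (gammaHat n j f) = (0 : ExtAlg n) := by
  ext T
  simpa [PiLp.add_apply] using anticomm j k f T

end Aux2

/-- The operator acting as multiplication by `2p − n` on the degree-`p` component. -/
noncomputable def degreeOp (n : ℕ) : ExtAlg n →ₗ[ℂ] ExtAlg n where
  toFun f := WithLp.toLp 2 (fun T : Finset (Fin n) => ((2 * T.card : ℂ) - (n : ℂ)) * f T)
  map_add' f g := by ext T; simp [PiLp.add_apply, mul_add]
  map_smul' c f := by ext T; simp [PiLp.smul_apply, smul_eq_mul]; ring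

section Aux3
variable {n : ℕ}

lemma sum_gammaHat_gammaCheck' (f : ExtAlg n) :
    ∑ k : Fin n, gammaHat n k (gammaCheck n k f) = degreeOp n f := by
  ext T
  rw [WithLp.ofLp_sum, Finset.sum_apply]
  exact sum_gammaHat_gammaCheck f T

end Aux3

/-- The Dirac operator `D₁ = Σ_k γ̂_k ∂_k` on functions `ℝⁿ → Λ*_ℂ(ℝⁿ)`. -/
noncomputable def diracOp (n : ℕ) (u : EuclideanSpace ℝ (Fin n) → ExtAlg n) :
    EuclideanSpace ℝ (Fin n) → ExtAlg n :=
  fun x => ∑ k : Fin n, gammaHat n k (fderiv ℝ u x (EuclideanSpace.single k 1))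

/-- Clifford multiplication by the position vector, `c₊(f) = Σ_k x_k γ̌_k`. -/
noncomputable def positionCliff (n : ℕ) (u : EuclideanSpace ℝ (Fin n) → ExtAlg n) :
    EuclideanSpace ℝ (Fin n) → ExtAlg n :=
  fun x => ∑ k : Fin n, ((x k : ℂ)) • gammaCheck n k (u x)

/-- The anticommutator `[D₁, c₊(f)]₊` equals multiplication by `2p − n` on `p`-forms. -/
theorem anticommutator_dirac_positionCliff (n : ℕ)
    (ω : SchwartzMap (EuclideanSpace ℝ (Fin n)) (ExtAlg n))
    (x : EuclideanSpace ℝ (Fin n)) :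
    diracOp n (positionCliff n ω) x + positionCliff n (diracOp n ω) x
      = degreeOp n (ω x) := by
  classical
  set Dω := fderiv ℝ (⇑ω) x with hDω
  set L : EuclideanSpace ℝ (Fin n) →L[ℝ] ExtAlg n :=
    ∑ k : Fin n, (((x k : ℂ)) • (((gammaCheck n k).toContinuousLinearMap.restrictScalars ℝ).comp Dω)
      + (Complex.ofRealCLM.comp (EuclideanSpace.proj k)).smulRight (gammaCheck n k (ω x)))
    with hLdef
  have hL : HasFDerivAt (fun y => ∑ k : Fin n, ((y k : ℂ)) • gammaCheck n k (ω y)) L x := by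
    apply HasFDerivAt.fun_sum
    intro k _
    have hc : HasFDerivAt (fun y : EuclideanSpace ℝ (Fin n) => ((y k : ℝ) : ℂ))
        (Complex.ofRealCLM.comp (EuclideanSpace.proj k)) x :=
      (Complex.ofRealCLM.comp (EuclideanSpace.proj k)).hasFDerivAt
    have hg : HasFDerivAt (fun y => gammaCheck n k (ω y))
        (((gammaCheck n k).toContinuousLinearMap.restrictScalars ℝ).comp Dω) x :=
      ((((gammaCheck n k).toContinuousLinearMap.restrictScalars ℝ)).hasFDerivAt).comp x
        (ω.differentiableAt.hasFDerivAt)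
    exact hc.smul hg
  have hfd : fderiv ℝ (fun y => ∑ k : Fin n, ((y k : ℂ)) • gammaCheck n k (ω y)) x = L :=
    hL.fderiv
  have hLapp : ∀ j : Fin n, L (EuclideanSpace.single j 1)
      = gammaCheck n j (ω x)
        + ∑ k : Fin n, ((x k : ℂ)) • gammaCheck n k (Dω (EuclideanSpace.single j 1)) := by
    intro j
    rw [hLdef, ContinuousLinearMap.sum_apply]
    have step : ∀ k : Fin n,
        (((x k : ℂ)) • (((gammaCheck n k).toContinuousLinearMap.restrictScalars ℝ).comp Dω)
          + (Complex.ofRealCLM.comp (EuclideanSpace.proj k)).smulRight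
            (gammaCheck n k (ω x))) (EuclideanSpace.single j 1)
        = ((x k : ℂ)) • gammaCheck n k (Dω (EuclideanSpace.single j 1))
          + (((EuclideanSpace.single j (1:ℝ) : EuclideanSpace ℝ (Fin n)) k : ℂ))
            • gammaCheck n k (ω x) := by
      intro k
      simp [ContinuousLinearMap.smulRight_apply]
    rw [Finset.sum_congr rfl (fun k _ => step k), Finset.sum_add_distrib, add_comm]
    congr 1
    have h2 : ∀ k : Fin n,
        (((EuclideanSpace.single j (1:ℝ) : EuclideanSpace ℝ (Fin n)) k : ℂ))
          • gammaCheck n k (ω x)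
        = if k = j then gammaCheck n j (ω x) else 0 := by
      intro k
      rw [EuclideanSpace.single_apply]
      by_cases h : k = j
      · subst h; simp
      · simp [h]
    rw [Finset.sum_congr rfl (fun k _ => h2 k), Finset.sum_ite_eq' Finset.univ j]
    simp
  have key : diracOp n (positionCliff n ⇑ω) x
      = ∑ j : Fin n, gammaHat n j (gammaCheck n j (ω x))
        + ∑ j : Fin n, ∑ k : Fin n,
            ((x k : ℂ)) • gammaHat n j (gammaCheck n k (Dω (EuclideanSpace.single j 1))) := by
    show ∑ j : Fin n, gammaHat n j (fderiv ℝ (positionCliff n ⇑ω) x (EuclideanSpace.single j 1)) = _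
    have hps : positionCliff n ⇑ω = fun y => ∑ k : Fin n, ((y k : ℂ)) • gammaCheck n k (ω y) := rfl
    rw [hps, hfd]
    calc ∑ j : Fin n, gammaHat n j (L (EuclideanSpace.single j 1))
        = ∑ j : Fin n, (gammaHat n j (gammaCheck n j (ω x))
            + ∑ k : Fin n, ((x k : ℂ)) • gammaHat n j (gammaCheck n k (Dω (EuclideanSpace.single j 1)))) := by
          refine Finset.sum_congr rfl fun j _ => ?_
          rw [hLapp j, map_add, map_sum]
          congr 1
          exact Finset.sum_congr rfl fun k _ => map_smul _ _ _
      _ = _ := Finset.sum_add_distrib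
  have key2 : positionCliff n (diracOp n ⇑ω) x
      = ∑ j : Fin n, ∑ k : Fin n,
          ((x k : ℂ)) • gammaCheck n k (gammaHat n j (Dω (EuclideanSpace.single j 1))) := by
    show ∑ k : Fin n, ((x k : ℂ)) • gammaCheck n k (diracOp n ⇑ω x) = _
    rw [Finset.sum_congr rfl (fun k _ => by
      rw [show diracOp n ⇑ω x
          = ∑ j : Fin n, gammaHat n j (Dω (EuclideanSpace.single j 1)) from rfl,
        map_sum, Finset.smul_sum])]
    exact Finset.sum_comm
  have hz : (∑ j : Fin n, ∑ k : Fin n,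
        ((x k : ℂ)) • gammaHat n j (gammaCheck n k (Dω (EuclideanSpace.single j 1))))
      + ∑ j : Fin n, ∑ k : Fin n,
        ((x k : ℂ)) • gammaCheck n k (gammaHat n j (Dω (EuclideanSpace.single j 1))) = 0 := by
    rw [← Finset.sum_add_distrib]
    apply Finset.sum_eq_zero
    intro j _
    rw [← Finset.sum_add_distrib]
    apply Finset.sum_eq_zero
    intro k _
    rw [← smul_add, anticomm', smul_zero]
  rw [key, key2, sum_gammaHat_gammaCheck', add_assoc, hz, add_zero]
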